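/- For a zero-mean bivariate Gaussian vector (X,Y) with unit variances and correlation coefficient ϱ satisfying |ϱ| < 1, the orthant probability satisfies P(X ≥ 0, Y ≥ 0) = 1/4 + arcsin(ϱ)/(2π). -/

import Mathlib

open Real MeasureTheory

/-- Density of a zero-mean bivariate Gaussian with unit variances and correlation ϱ. -/
noncomputable def phi2 (ϱ x y : ℝ) : ℝ :=
  (1 / (2 * π * Real.sqrt (1 - ϱ^2))) *
    Real.exp (-(x^2 - 2*ϱ*x*y + y^2) / (2 * (1 - ϱ^2)))

section Aux

open Set Filter

lemma wedge_iff {ϱ θ : ℝ} (hϱ : |ϱ| < 1) (hθ1 : -π < θ) (hθ2 : θ < π) :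
    (0 ≤ Real.cos θ ∧ 0 ≤ ϱ * Real.cos θ + Real.sqrt (1 - ϱ^2) * Real.sin θ) ↔
    (-Real.arcsin ϱ ≤ θ ∧ θ ≤ π/2) := by
  obtain ⟨h1, h2⟩ := abs_lt.mp hϱ
  set α := Real.arcsin ϱ with hα
  have hα1 : -(π/2) < α := Real.neg_pi_div_two_lt_arcsin.mpr h1
  have hα2 : α < π/2 := Real.arcsin_lt_pi_div_two.mpr h2
  have hsin : Real.sin α = ϱ := Real.sin_arcsin h1.le h2.le
  have hcos : Real.cos α = Real.sqrt (1 - ϱ^2) := Real.cos_arcsin ϱ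
  have key : ϱ * Real.cos θ + Real.sqrt (1 - ϱ^2) * Real.sin θ = Real.sin (θ + α) := by
    rw [Real.sin_add, hsin, hcos]; ring
  rw [key]
  constructor
  · rintro ⟨hc, hs⟩
    have hθl : -(π/2) ≤ θ := by
      by_contra hcon
      push_neg at hcon
      have : Real.cos (-θ) < 0 :=
        Real.cos_neg_of_pi_div_two_lt_of_lt (by linarith) (by linarith [Real.pi_pos])
      rw [Real.cos_neg] at this; linarith
    have hθr : θ ≤ π/2 := by
      by_contra hcon
      push_neg at hcon
      have : Real.cos θ < 0 :=
        Real.cos_neg_of_pi_div_two_lt_of_lt hcon (by linarith [Real.pi_pos])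
      linarith
    refine ⟨?_, hθr⟩
    by_contra hcon
    push_neg at hcon
    have : Real.sin (θ + α) < 0 :=
      Real.sin_neg_of_neg_of_neg_pi_lt (by linarith) (by linarith)
    linarith
  · rintro ⟨hl, hr⟩
    refine ⟨Real.cos_nonneg_of_mem_Icc ⟨by linarith, hr⟩, ?_⟩
    exact Real.sin_nonneg_of_nonneg_of_le_pi (by linarith) (by linarith)

lemma radial_integral : ∫ r in Set.Ioi (0:ℝ), r * Real.exp (-r^2/2) = 1 := by
  have h : ∀ x ∈ Set.Ioi (0:ℝ), HasDerivAt (fun r : ℝ => -Real.exp (-r^2/2))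
      (x * Real.exp (-x^2/2)) x := by
    intro x _
    have h1 : HasDerivAt (fun r : ℝ => -r^2/2) (-x) x := by
      have := (hasDerivAt_pow 2 x).const_mul (-1/2 : ℝ)
      have e1 : (fun r : ℝ => -r^2/2) = fun r : ℝ => (-1/2 : ℝ) * r^2 := by funext r; ring
      rw [e1]
      convert this using 1
      all_goals first | rfl | (push_cast; ring)
    have h2 := h1.exp
    convert h2.neg using 1
    all_goals first | rfl | ring
  have hint : IntegrableOn (fun r : ℝ => r * Real.exp (-r^2/2)) (Set.Ioi 0) := by
    have : (fun r : ℝ => r * Real.exp (-r^2/2)) = fun r => r * Real.exp (-(1/2) * r^2) := by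
      funext r; ring_nf
    rw [this]
    exact (integrable_mul_exp_neg_mul_sq (by norm_num : (0:ℝ) < 1/2)).integrableOn
  have htend : Tendsto (fun r : ℝ => -Real.exp (-r^2/2)) atTop (nhds 0) := by
    rw [show (0:ℝ) = -0 by ring]
    apply Tendsto.neg
    apply Real.tendsto_exp_atBot.comp
    apply Tendsto.atBot_div_const (by norm_num : (0:ℝ) < 2)
    exact tendsto_neg_atBot_iff.mpr (tendsto_pow_atTop (by norm_num))
  have := integral_Ioi_of_hasDerivAt_of_tendsto
    (Continuous.continuousWithinAt (by continuity)) h hint htend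
  rw [this]; norm_num

lemma inner_sub (ϱ : ℝ) (hϱ : |ϱ| < 1) (x : ℝ) :
    (∫ y in Set.Ici (0:ℝ), phi2 ϱ x y)
      = ∫ v in Set.Ici (-(ϱ*x)/Real.sqrt (1-ϱ^2)),
          (1/(2*π)) * Real.exp (-(x^2+v^2)/2) := by
  have hπ := Real.pi_pos
  obtain ⟨h1, h2⟩ := abs_lt.mp hϱ
  have hϱ2 : ϱ^2 < 1 := by nlinarith
  set s := Real.sqrt (1 - ϱ^2) with hs_def
  have hs : 0 < s := Real.sqrt_pos.mpr (by linarith)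
  have hs2 : s^2 = 1 - ϱ^2 := Real.sq_sqrt (by linarith)
  have step : ∀ F : ℝ → ℝ, (∫ y, F y) = s * ∫ v, F (s*v + ϱ*x) := by
    intro F
    have h1' := MeasureTheory.Measure.integral_comp_mul_left (fun u => F (u + ϱ*x)) s
    have h2' := MeasureTheory.integral_add_right_eq_self (μ := volume) F (ϱ*x)
    simp only [smul_eq_mul] at h1'
    rw [h2'] at h1'
    rw [h1', abs_of_pos (inv_pos.mpr hs)]
    field_simp
  have hind : ∀ v : ℝ, (Set.Ici (0:ℝ)).indicator (phi2 ϱ x) (s*v + ϱ*x)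
      = (Set.Ici (-(ϱ*x)/s)).indicator
          (fun v => phi2 ϱ x (s*v + ϱ*x)) v := by
    intro v
    simp only [Set.indicator_apply, Set.mem_Ici]
    have hiff : (0 ≤ s*v + ϱ*x) ↔ (-(ϱ*x)/s ≤ v) := by
      rw [div_le_iff₀ hs]
      constructor <;> intro h <;> nlinarith
    rw [if_congr hiff rfl rfl]
  have hval : ∀ v : ℝ, phi2 ϱ x (s*v + ϱ*x)
      = (1/(2*π*s)) * Real.exp (-(x^2+v^2)/2) := by
    intro v
    have hexp : x^2 - 2*ϱ*x*(s*v + ϱ*x) + (s*v + ϱ*x)^2 = s^2 * (x^2 + v^2) := by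
      linear_combination (-x^2) * hs2
    simp only [phi2, ← hs_def]
    congr 1
    rw [← hs2, hexp]
    field_simp
  calc ∫ y in Set.Ici (0:ℝ), phi2 ϱ x y
      = ∫ y, (Set.Ici (0:ℝ)).indicator (phi2 ϱ x) y := by
        rw [integral_indicator measurableSet_Ici]
    _ = s * ∫ v, (Set.Ici (0:ℝ)).indicator (phi2 ϱ x) (s*v + ϱ*x) :=
        step _
    _ = s * ∫ v, (Set.Ici (-(ϱ*x)/s)).indicator (fun v => phi2 ϱ x (s*v + ϱ*x)) v := by
        congr 1; exact integral_congr_ae (Filter.Eventually.of_forall hind)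
    _ = s * ∫ v in Set.Ici (-(ϱ*x)/s), phi2 ϱ x (s*v + ϱ*x) := by
        rw [integral_indicator measurableSet_Ici]
    _ = s * ∫ v in Set.Ici (-(ϱ*x)/s), (1/(2*π*s)) * Real.exp (-(x^2+v^2)/2) := by
        congr 1; exact integral_congr_ae (Filter.Eventually.of_forall fun v => hval v)
    _ = ∫ v in Set.Ici (-(ϱ*x)/s), (1/(2*π)) * Real.exp (-(x^2+v^2)/2) := by
        rw [integral_const_mul, integral_const_mul, ← mul_assoc]
        congr 1
        field_simp

end Aux

/-- Sheppard's formula for the bivariate Gaussian orthant probability. -/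
theorem bivariate_orthant_probability (ϱ : ℝ) (hϱ : |ϱ| < 1) :
    (∫ x in Set.Ici (0:ℝ), ∫ y in Set.Ici (0:ℝ), phi2 ϱ x y)
      = 1/4 + Real.arcsin ϱ / (2 * π) := by
  have hπ := Real.pi_pos
  obtain ⟨h1, h2⟩ := abs_lt.mp hϱ
  have hϱ2 : ϱ^2 < 1 := by nlinarith
  set s := Real.sqrt (1 - ϱ^2) with hs_def
  have hs : 0 < s := Real.sqrt_pos.mpr (by linarith)
  set α := Real.arcsin ϱ with hα_def
  have hα1 : -(π/2) < α := Real.neg_pi_div_two_lt_arcsin.mpr h1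
  have hα2 : α < π/2 := Real.arcsin_lt_pi_div_two.mpr h2
  set A : Set (ℝ × ℝ) := {p | 0 ≤ p.1 ∧ 0 ≤ ϱ * p.1 + s * p.2} with hA_def
  set g : ℝ × ℝ → ℝ := fun p => (1/(2*π)) * Real.exp (-(p.1^2 + p.2^2)/2) with hg_def
  set f : ℝ × ℝ → ℝ := A.indicator g with hf_def
  have hA : MeasurableSet A := by
    have : A = {p : ℝ × ℝ | 0 ≤ p.1} ∩ {p | 0 ≤ ϱ * p.1 + s * p.2} := rfl
    rw [this]
    exact (measurableSet_le measurable_const measurable_fst).inter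
      (measurableSet_le measurable_const (by fun_prop))
  have hg_int : Integrable g := by
    have he : g = fun p : ℝ × ℝ =>
        ((1/(2*π)) * Real.exp (-(1/2) * p.1^2)) * Real.exp (-(1/2) * p.2^2) := by
      funext p
      have harg : -(p.1^2 + p.2^2)/2 = -(1/2) * p.1^2 + -(1/2) * p.2^2 := by ring
      rw [hg_def]
      beta_reduce
      rw [harg, Real.exp_add, mul_assoc]
    rw [he, MeasureTheory.Measure.volume_eq_prod]
    have i1 : Integrable (fun x : ℝ => (1/(2*π)) * Real.exp (-(1/2) * x^2)) volume :=
      (integrable_exp_neg_mul_sq (by norm_num : (0:ℝ) < 1/2)).const_mul _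
    have i2 : Integrable (fun x : ℝ => Real.exp (-(1/2) * x^2)) volume :=
      integrable_exp_neg_mul_sq (by norm_num : (0:ℝ) < 1/2)
    exact i1.mul_prod i2
  have hf_int : Integrable f := hg_int.indicator hA
  -- Step 1: the iterated integral equals ∫ f over the plane
  have main1 : (∫ x in Set.Ici (0:ℝ), ∫ y in Set.Ici (0:ℝ), phi2 ϱ x y) = ∫ p, f p := by
    have hptwise : ∀ x : ℝ,
        (Set.Ici (0:ℝ)).indicator (fun x => ∫ y in Set.Ici (0:ℝ), phi2 ϱ x y) x
          = ∫ v, f (x, v) := by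
      intro x
      by_cases hx : (0:ℝ) ≤ x
      · rw [Set.indicator_of_mem (show x ∈ Set.Ici (0:ℝ) from hx), inner_sub ϱ hϱ x, ← integral_indicator measurableSet_Ici]
        apply integral_congr_ae
        filter_upwards with v
        rw [hf_def]
        simp only [Set.indicator_apply, Set.mem_Ici, hA_def, Set.mem_setOf_eq]
        have hiff : (-(ϱ*x)/s ≤ v) ↔ (0 ≤ x ∧ 0 ≤ ϱ * x + s * v) := by
          rw [div_le_iff₀ hs]
          constructor
          · intro h; exact ⟨hx, by nlinarith⟩
          · rintro ⟨-, h⟩; nlinarith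
        rw [if_congr hiff rfl rfl]
      · rw [Set.indicator_of_notMem (show x ∉ Set.Ici (0:ℝ) from hx)]
        have hz : ∀ v : ℝ, f (x, v) = 0 := by
          intro v
          apply Set.indicator_of_notMem
          rw [hA_def]
          intro hmem
          exact hx hmem.1
        simp [hz]
    calc (∫ x in Set.Ici (0:ℝ), ∫ y in Set.Ici (0:ℝ), phi2 ϱ x y)
        = ∫ x, (Set.Ici (0:ℝ)).indicator (fun x => ∫ y in Set.Ici (0:ℝ), phi2 ϱ x y) x := by
          rw [integral_indicator measurableSet_Ici]
      _ = ∫ x, ∫ v, f (x, v) := integral_congr_ae (Filter.Eventually.of_forall hptwise)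
      _ = ∫ p, f p := by
          rw [MeasureTheory.Measure.volume_eq_prod]
          have huncurry : Function.uncurry (fun x v : ℝ => f (x, v)) = f := by
            funext p; simp [Function.uncurry]
          have hf_int' : Integrable (Function.uncurry fun x v : ℝ => f (x, v))
              (volume.prod volume) := by
            rw [huncurry, ← MeasureTheory.Measure.volume_eq_prod]; exact hf_int
          have := MeasureTheory.integral_integral hf_int'
          rw [this]
  -- Step 2: polar coordinates
  have main2 : (∫ p, f p)
      = (∫ r in Set.Ioi (0:ℝ), r * Real.exp (-r^2/2))
        * ∫ θ in Set.Ioo (-π) π, (Set.Icc (-α) (π/2)).indicator (fun _ => 1/(2*π)) θ := by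
    rw [← integral_comp_polarCoord_symm f]
    have htarget : polarCoord.target = Set.Ioi (0:ℝ) ×ˢ Set.Ioo (-π) π := rfl
    rw [htarget]
    have heq : ∀ p ∈ Set.Ioi (0:ℝ) ×ˢ Set.Ioo (-π) π,
        p.1 • f (polarCoord.symm p)
          = (p.1 * Real.exp (-p.1^2/2))
            * (Set.Icc (-α) (π/2)).indicator (fun _ => 1/(2*π)) p.2 := by
      rintro ⟨r, θ⟩ ⟨hr, hθ⟩
      simp only [Set.mem_Ioi] at hr
      simp only [Set.mem_Ioo] at hθ
      have hsymm : polarCoord.symm (r, θ) = (r * Real.cos θ, r * Real.sin θ) := rfl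
      rw [hsymm]
      have hmem : ((r * Real.cos θ, r * Real.sin θ) ∈ A)
          ↔ θ ∈ Set.Icc (-α) (π/2) := by
        rw [hA_def, Set.mem_setOf_eq, Set.mem_Icc, ← wedge_iff hϱ hθ.1 hθ.2]
        constructor
        · rintro ⟨ha, hb⟩
          constructor
          · exact nonneg_of_mul_nonneg_right (by simpa [mul_comm] using ha) hr
          · have : 0 ≤ r * (ϱ * Real.cos θ + s * Real.sin θ) := by
              calc (0:ℝ) ≤ ϱ * (r * Real.cos θ) + s * (r * Real.sin θ) := hb
                _ = r * (ϱ * Real.cos θ + s * Real.sin θ) := by ring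
            exact nonneg_of_mul_nonneg_right (by simpa [mul_comm] using this) hr
        · rintro ⟨ha, hb⟩
          constructor
          · exact mul_nonneg hr.le ha
          · calc (0:ℝ) ≤ r * (ϱ * Real.cos θ + s * Real.sin θ) :=
                mul_nonneg hr.le hb
              _ = ϱ * (r * Real.cos θ) + s * (r * Real.sin θ) := by ring
      have hgval : g (r * Real.cos θ, r * Real.sin θ)
          = (1/(2*π)) * Real.exp (-r^2/2) := by
        have h2 : (r * Real.cos θ)^2 + (r * Real.sin θ)^2 = r^2 := by
          linear_combination r^2 * (Real.sin_sq_add_cos_sq θ)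
        rw [hg_def]
        beta_reduce
        rw [h2]
      by_cases hc : θ ∈ Set.Icc (-α) (π/2)
      · rw [hf_def, Set.indicator_of_mem (hmem.mpr hc), Set.indicator_of_mem hc, hgval]
        simp only [smul_eq_mul]
        ring
      · rw [hf_def, Set.indicator_of_notMem (fun h => hc (hmem.mp h)),
          Set.indicator_of_notMem hc]
        simp
    rw [MeasureTheory.setIntegral_congr_fun (measurableSet_Ioi.prod measurableSet_Ioo) heq]
    rw [MeasureTheory.Measure.volume_eq_prod]
    exact MeasureTheory.setIntegral_prod_mul (fun r : ℝ => r * Real.exp (-r^2/2))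
      (fun θ : ℝ => (Set.Icc (-α) (π/2)).indicator (fun _ => 1/(2*π)) θ) (Set.Ioi 0) (Set.Ioo (-π) π)
  -- Step 3: compute both one-dimensional integrals
  have hθint : (∫ θ in Set.Ioo (-π) π,
      (Set.Icc (-α) (π/2)).indicator (fun _ => 1/(2*π)) θ) = (1/(2*π)) * (π/2 + α) := by
    rw [MeasureTheory.setIntegral_indicator measurableSet_Icc]
    have hsub : Set.Icc (-α) (π/2) ⊆ Set.Ioo (-π) π := by
      intro x hx
      obtain ⟨hx1, hx2⟩ := hx
      constructor <;> [linarith; linarith]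
    rw [Set.inter_eq_self_of_subset_right hsub, MeasureTheory.setIntegral_const,
      Real.volume_real_Icc_of_le (by linarith), smul_eq_mul]
    ring
  rw [main1, main2, radial_integral, hθint]
  field_simp
  ring
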